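/- Let G = (N, E) be a directed graph with tail set V_t, and let V_ud, V̄_ud : (ℝ^d)^n → ℝ be differentiable. Then for every state X ∈ (ℝ^d)^n, the proposed controller satisfies ⟨∇_i V_ud(X), ḡ_i(X)⟩ ≥ 0 for every i ∈ V_t, and consequently the dissipation inequality Σ_{i∈N} ⟨∇_i V_ud(X), f_i(X)⟩ = −Σ_{i∈V_t} (⟨∇_i V_ud(X), ḡ_i(X)⟩ + κ_i ‖∇_i V_ud(X)‖²) − Σ_{i∈N\V_t} μ_i ‖∇_i V_ud(X)‖² ≤ 0 holds. -/
import Mathlib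


open scoped RealInnerProductSpace

/-- The set of unidirectional edges of a directed graph with edge set `E`:
edges `(i,j) ∈ E` whose reverse `(j,i)` is not in `E`. -/
def Edi {n : ℕ} (E : Set (Fin n × Fin n)) : Set (Fin n × Fin n) :=
  {p | p ∈ E ∧ (p.2, p.1) ∉ E}

/-- The set of bidirectional edges of a directed graph with edge set `E`. -/
def Eud {n : ℕ} (E : Set (Fin n × Fin n)) : Set (Fin n × Fin n) :=
  {p | p ∈ E ∧ (p.2, p.1) ∈ E}

/-- The set of tails of unidirectional edges. -/
def Vt {n : ℕ} (E : Set (Fin n × Fin n)) : Set (Fin n) :=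
  {i | ∃ j, (i, j) ∈ Edi E}

/-- The set of heads of unidirectional edges. -/
def Vh {n : ℕ} (E : Set (Fin n × Fin n)) : Set (Fin n) :=
  {i | ∃ j, (j, i) ∈ Edi E}

/-- The undirected closure edge set `Ē_ud = E ∪ {(i,j) : (j,i) ∈ E_di}`. -/
def Ebar {n : ℕ} (E : Set (Fin n × Fin n)) : Set (Fin n × Fin n) :=
  E ∪ {p | (p.2, p.1) ∈ Edi E}

/-- The gradient `∇_i V(X) ∈ ℝ^d` of `V : (ℝ^d)^n → ℝ` with respect to the state `x_i`
of agent `i`. -/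
noncomputable def gradI {d n : ℕ} (V : (Fin n → EuclideanSpace ℝ (Fin d)) → ℝ)
    (i : Fin n) (X : Fin n → EuclideanSpace ℝ (Fin d)) : EuclideanSpace ℝ (Fin d) :=
  gradient (fun z => V (Function.update X i z)) (X i)

/-- `V` is gradient-distributed with respect to the graph with edge set `F`: for all `i`
and states agreeing on `N_i ∪ {i}`, the `i`-th gradient agrees. -/
def GradDistrib {d n : ℕ} (F : Set (Fin n × Fin n))
    (V : (Fin n → EuclideanSpace ℝ (Fin d)) → ℝ) : Prop :=
  ∀ i : Fin n, ∀ X X' : Fin n → EuclideanSpace ℝ (Fin d),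
    (∀ j, (i, j) ∈ F → X j = X' j) → X i = X' i → gradI V i X = gradI V i X'

/-- The constrained projection `ḡ` (explicit solution of the minimization problem
`min ‖g − (λ a + η b)/2‖²` s.t. `⟨g,a⟩ ≥ 0`, `⟨g,b⟩ ≥ 0`), where `a = ∇_i V̄_ud(X)`,
`b = ∇_i V_ud(X)`.  The final case is unreachable for `λ, η > 0`. -/
noncomputable def gbar {d : ℕ} (lam eta : ℝ) (a b : EuclideanSpace ℝ (Fin d)) :
    EuclideanSpace ℝ (Fin d) :=
  let gh := (2 : ℝ)⁻¹ • (lam • a + eta • b)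
  if 0 ≤ ⟪gh, a⟫ ∧ 0 ≤ ⟪gh, b⟫ then gh
  else if ⟪gh, a⟫ < 0 ∧ 0 ≤ ⟪gh, b⟫ then gh - (⟪gh, a⟫ / ‖a‖ ^ 2) • a
  else if 0 ≤ ⟪gh, a⟫ ∧ ⟪gh, b⟫ < 0 then gh - (⟪gh, b⟫ / ‖b‖ ^ 2) • b
  else gh

open Classical in
/-- The proposed distributed controller `f_i(X)`:
`f_i(X) = −ḡ_i(X) − κ_i ∇_i V_ud(X)` for `i ∈ V_t` and
`f_i(X) = −μ_i ∇_i V_ud(X)` for `i ∈ N \ V_t`. -/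
noncomputable def ctrl {d n : ℕ} (E : Set (Fin n × Fin n))
    (Vud Vbud : (Fin n → EuclideanSpace ℝ (Fin d)) → ℝ)
    (lam eta kappa mu : Fin n → ℝ) (i : Fin n)
    (X : Fin n → EuclideanSpace ℝ (Fin d)) : EuclideanSpace ℝ (Fin d) :=
  if i ∈ Vt E then
    -gbar (lam i) (eta i) (gradI Vbud i X) (gradI Vud i X) - kappa i • gradI Vud i X
  else
    -(mu i • gradI Vud i X)

lemma gbar_inner_nonneg {d : ℕ} {lam eta : ℝ} (hl : 0 < lam) (he : 0 < eta)
    (a b : EuclideanSpace ℝ (Fin d)) : 0 ≤ ⟪b, gbar lam eta a b⟫ := by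
  unfold gbar
  set gh : EuclideanSpace ℝ (Fin d) := (2:ℝ)⁻¹ • (lam • a + eta • b) with hgh
  have hga : ⟪gh, a⟫ = (2:ℝ)⁻¹ * (lam * ⟪a,a⟫ + eta * ⟪a,b⟫) := by
    rw [hgh, real_inner_smul_left, inner_add_left, real_inner_smul_left,
      real_inner_smul_left, real_inner_comm b a]
  have hgb : ⟪gh, b⟫ = (2:ℝ)⁻¹ * (lam * ⟪a,b⟫ + eta * ⟪b,b⟫) := by
    rw [hgh, real_inner_smul_left, inner_add_left, real_inner_smul_left,
      real_inner_smul_left]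
  have hgg : ⟪gh, gh⟫ = (2:ℝ)⁻¹ * (lam * ⟪gh,a⟫ + eta * ⟪gh,b⟫) := by
    nth_rewrite 2 [hgh]
    rw [real_inner_smul_right, inner_add_right, real_inner_smul_right,
      real_inner_smul_right]
  clear_value gh
  simp only
  split_ifs with h1 h2 h3
  · rw [real_inner_comm]; exact h1.2
  · -- ⟪gh,a⟫ < 0, 0 ≤ ⟪gh,b⟫
    have ha : a ≠ 0 := by
      rintro rfl; rw [inner_zero_right] at h2; exact absurd h2.1 (lt_irrefl 0)
    have hA : (0:ℝ) < ⟪a,a⟫ := by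
      rw [real_inner_self_eq_norm_sq]; exact pow_pos (norm_pos_iff.mpr ha) 2
    have hcs : ⟪a,b⟫ * ⟪a,b⟫ ≤ ⟪a,a⟫ * ⟪b,b⟫ := real_inner_mul_inner_self_le a b
    rw [inner_sub_right, real_inner_smul_right, real_inner_comm gh b,
      real_inner_comm a b, ← real_inner_self_eq_norm_sq, hga, hgb,
      sub_nonneg, div_mul_eq_mul_div, div_le_iff₀ hA]
    nlinarith [hcs, he.le]
  · -- 0 ≤ ⟪gh,a⟫, ⟪gh,b⟫ < 0
    have hb : b ≠ 0 := by
      rintro rfl; rw [inner_zero_right] at h3; exact absurd h3.2 (lt_irrefl 0)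
    have hB : (0:ℝ) < ⟪b,b⟫ := by
      rw [real_inner_self_eq_norm_sq]; exact pow_pos (norm_pos_iff.mpr hb) 2
    rw [inner_sub_right, real_inner_smul_right, real_inner_comm gh b,
      ← real_inner_self_eq_norm_sq]
    have hc : ⟪gh,b⟫ / ⟪b,b⟫ * ⟪b,b⟫ = ⟪gh,b⟫ := div_mul_cancel₀ _ hB.ne'
    linarith [hc]
  · -- unreachable case : both inner products negative
    exfalso
    push_neg at h1 h2 h3
    have hga' : ⟪gh, a⟫ < 0 := by
      by_contra hc
      push_neg at hc
      exact absurd (h3 hc) (not_le.mpr (h1 hc))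
    have hgb' : ⟪gh, b⟫ < 0 := h2 hga'
    have hsq : (0:ℝ) ≤ ⟪gh, gh⟫ := real_inner_self_nonneg
    nlinarith [mul_pos hl (neg_pos.mpr hga'), mul_pos he (neg_pos.mpr hgb')]

open Classical in
/-- For every state `X`, the proposed controller satisfies
`⟨∇_i V_ud(X), ḡ_i(X)⟩ ≥ 0` for all `i ∈ V_t`, and the dissipation identity/inequality
`Σ_{i∈N} ⟨∇_i V_ud(X), f_i(X)⟩
  = −Σ_{i∈V_t} (⟨∇_i V_ud(X), ḡ_i(X)⟩ + κ_i ‖∇_i V_ud(X)‖²)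
    − Σ_{i∈N∖V_t} μ_i ‖∇_i V_ud(X)‖² ≤ 0`. -/
theorem controller_dissipation
    {d n : ℕ} (E : Set (Fin n × Fin n)) (hE : ∀ p ∈ E, p.1 ≠ p.2)
    (Vud Vbud : (Fin n → EuclideanSpace ℝ (Fin d)) → ℝ)
    (hVud_diff : Differentiable ℝ Vud) (hVbud_diff : Differentiable ℝ Vbud)
    (lam eta kappa mu : Fin n → ℝ)
    (hlam : ∀ i ∈ Vt E, 0 < lam i) (heta : ∀ i ∈ Vt E, 0 < eta i)
    (hkappa : ∀ i ∈ Vt E, 0 ≤ kappa i) (hmu : ∀ i ∉ Vt E, 0 < mu i)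
    (X : Fin n → EuclideanSpace ℝ (Fin d)) :
    (∀ i ∈ Vt E,
      0 ≤ ⟪gradI Vud i X, gbar (lam i) (eta i) (gradI Vbud i X) (gradI Vud i X)⟫) ∧
    (∑ i : Fin n, ⟪gradI Vud i X, ctrl E Vud Vbud lam eta kappa mu i X⟫ =
      -(∑ i ∈ Finset.univ.filter (fun i => i ∈ Vt E),
          (⟪gradI Vud i X, gbar (lam i) (eta i) (gradI Vbud i X) (gradI Vud i X)⟫ +
            kappa i * ‖gradI Vud i X‖ ^ 2)) -
        ∑ i ∈ Finset.univ.filter (fun i => i ∉ Vt E), mu i * ‖gradI Vud i X‖ ^ 2) ∧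
    (∑ i : Fin n, ⟪gradI Vud i X, ctrl E Vud Vbud lam eta kappa mu i X⟫ ≤ 0) := by
  have key : ∀ i ∈ Vt E,
      0 ≤ ⟪gradI Vud i X, gbar (lam i) (eta i) (gradI Vbud i X) (gradI Vud i X)⟫ :=
    fun i hi => gbar_inner_nonneg (hlam i hi) (heta i hi) _ _
  have h1 : ∀ i ∈ Finset.univ.filter (fun i => i ∈ Vt E),
      ⟪gradI Vud i X, ctrl E Vud Vbud lam eta kappa mu i X⟫ =
      -(⟪gradI Vud i X, gbar (lam i) (eta i) (gradI Vbud i X) (gradI Vud i X)⟫ +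
        kappa i * ‖gradI Vud i X‖ ^ 2) := by
    intro i hi
    rw [Finset.mem_filter] at hi
    rw [ctrl, if_pos hi.2, inner_sub_right, inner_neg_right,
      real_inner_smul_right, real_inner_self_eq_norm_sq]
    ring
  have h2 : ∀ i ∈ Finset.univ.filter (fun i => i ∉ Vt E),
      ⟪gradI Vud i X, ctrl E Vud Vbud lam eta kappa mu i X⟫ =
      -(mu i * ‖gradI Vud i X‖ ^ 2) := by
    intro i hi
    rw [Finset.mem_filter] at hi
    rw [ctrl, if_neg hi.2, inner_neg_right, real_inner_smul_right,
      real_inner_self_eq_norm_sq]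
  have hsum : ∑ i : Fin n, ⟪gradI Vud i X, ctrl E Vud Vbud lam eta kappa mu i X⟫ =
      -(∑ i ∈ Finset.univ.filter (fun i => i ∈ Vt E),
          (⟪gradI Vud i X, gbar (lam i) (eta i) (gradI Vbud i X) (gradI Vud i X)⟫ +
            kappa i * ‖gradI Vud i X‖ ^ 2)) -
        ∑ i ∈ Finset.univ.filter (fun i => i ∉ Vt E), mu i * ‖gradI Vud i X‖ ^ 2 := by
    rw [← Finset.sum_filter_add_sum_filter_not Finset.univ (fun i => i ∈ Vt E),
      Finset.sum_congr rfl h1, Finset.sum_congr rfl h2, Finset.sum_neg_distrib,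
      Finset.sum_neg_distrib]
    ring
  refine ⟨key, hsum, ?_⟩
  rw [hsum]
  have hA : 0 ≤ ∑ i ∈ Finset.univ.filter (fun i => i ∈ Vt E),
      (⟪gradI Vud i X, gbar (lam i) (eta i) (gradI Vbud i X) (gradI Vud i X)⟫ +
        kappa i * ‖gradI Vud i X‖ ^ 2) := by
    refine Finset.sum_nonneg fun i hi => ?_
    rw [Finset.mem_filter] at hi
    have := key i hi.2
    have := mul_nonneg (hkappa i hi.2) (sq_nonneg ‖gradI Vud i X‖)
    linarith
  have hB : 0 ≤ ∑ i ∈ Finset.univ.filter (fun i => i ∉ Vt E),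
      mu i * ‖gradI Vud i X‖ ^ 2 := by
    refine Finset.sum_nonneg fun i hi => ?_
    rw [Finset.mem_filter] at hi
    exact mul_nonneg (hmu i hi.2).le (sq_nonneg _)
  linarith
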